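/- Let p be a prime and a_1, ..., a_n integers with a_n ≠ 0 and p > |a_1| + ... + |a_n|. Then the polynomial a_n x^n + ... + a_1 x - p is irreducible over Z. -/

import Mathlib

open Polynomial

private lemma multiset_prod_gt_one {s : Multiset ℝ} (hs : s ≠ 0)
    (h : ∀ x ∈ s, 1 < x) : 1 < s.prod := by
  induction s using Multiset.induction with
  | empty => simp at hs
  | cons a t ih =>
    rw [Multiset.prod_cons]
    have ha : 1 < a := h a (Multiset.mem_cons_self a t)
    rcases eq_or_ne t 0 with rfl | ht
    · simpa using ha
    · have := ih ht (fun x hx => h x (Multiset.mem_cons_of_mem hx))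
      nlinarith

theorem stmt_6 (p : ℕ) (hp : p.Prime) (m : ℕ) (a : Fin (m + 1) → ℤ)
    (hlead : a (Fin.last m) ≠ 0)
    (hdom : (p : ℤ) > ∑ i, |a i|)
    (f : ℤ[X]) (hf : f = C (-(p : ℤ)) + ∑ i, C (a i) * X ^ ((i : ℕ) + 1)) :
    Irreducible f := by
  have hinj : Function.Injective (Int.castRingHom ℂ) := fun x y h => by
    simpa using h
  -- every complex root of f has absolute value > 1
  have hroot : ∀ z : ℂ, (f.map (Int.castRingHom ℂ)).IsRoot z → 1 < ‖z‖ := by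
    intro z hz
    by_contra hle
    push_neg at hle
    have hev : (f.map (Int.castRingHom ℂ)).eval z = 0 := hz
    rw [hf] at hev
    simp only [Polynomial.map_add, Polynomial.map_sum, Polynomial.map_mul,
      Polynomial.map_pow, map_C, map_X, eval_add, eval_C, eval_finset_sum, eval_mul,
      eval_pow, eval_X, eq_intCast, Polynomial.map_intCast, Polynomial.eval_intCast,
      Polynomial.map_neg, Polynomial.map_natCast, eval_neg, eval_intCast, eval_natCast] at hev
    push_cast at hev
    have hpz : (p : ℂ) = ∑ i : Fin (m + 1), ((a i : ℂ)) * z ^ ((i : ℕ) + 1) := by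
      linear_combination -hev
    have habs : (p : ℝ) ≤ ∑ i : Fin (m + 1), |(a i : ℝ)| := by
      calc (p : ℝ) = ‖(p : ℂ)‖ := by simp
        _ = ‖∑ i : Fin (m + 1), ((a i : ℂ)) * z ^ ((i : ℕ) + 1)‖ := by rw [hpz]
        _ ≤ ∑ i : Fin (m + 1), ‖(a i : ℂ) * z ^ ((i : ℕ) + 1)‖ :=
            norm_sum_le _ _
        _ ≤ ∑ i : Fin (m + 1), |(a i : ℝ)| := by
            apply Finset.sum_le_sum
            intro i _
            rw [norm_mul, norm_pow]
            have h1 : ‖z‖ ^ ((i : ℕ) + 1) ≤ 1 :=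
              pow_le_one₀ (norm_nonneg z) hle
            have h2 : ‖(a i : ℂ)‖ = |(a i : ℝ)| := by
              rw [show ((a i : ℂ)) = (((a i : ℝ) : ℂ)) by push_cast; ring,
                Complex.norm_real, Real.norm_eq_abs]
            nlinarith [norm_nonneg ((a i : ℂ)), abs_nonneg ((a i : ℝ))]
    have hdom' : (∑ i : Fin (m + 1), |(a i : ℝ)|) < (p : ℝ) := by
      have h3 : ((∑ i : Fin (m + 1), |a i| : ℤ) : ℝ) < ((p : ℤ) : ℝ) := by
        exact_mod_cast hdom
      push_cast at h3
      convert h3 using 2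
    linarith
  have hf0 : f.eval 0 = -(p : ℤ) := by
    rw [hf]
    simp [eval_finset_sum]
  have hfne : f ≠ 0 := by
    intro h
    rw [h] at hf0
    simp at hf0
    have := hp.pos
    omega
  -- any divisor of f with unit constant coefficient is a unit
  have key : ∀ g : ℤ[X], g ∣ f → IsUnit (g.eval 0) → IsUnit g := by
    intro g hg hu
    have hgne : g ≠ 0 := by rintro rfl; exact hfne (zero_dvd_iff.mp hg)
    set gC := g.map (Int.castRingHom ℂ) with hgC
    have hgCne : gC ≠ 0 := (Polynomial.map_ne_zero_iff hinj).mpr hgne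
    have hsplits : Splits gC := IsAlgClosed.splits gC
    have hprod := hsplits.eq_prod_roots
    have hev0 : gC.eval 0 = gC.leadingCoeff * (gC.roots.map (fun r => -r)).prod := by
      conv_lhs => rw [hprod]
      rw [eval_mul, eval_C, eval_multiset_prod, Multiset.map_map]
      congr 2
      ext r
      simp
    have habs0 : (1 : ℝ) = ‖gC.leadingCoeff‖ *
        (gC.roots.map (fun r => ‖r‖)).prod := by
      have h1 : ‖gC.eval 0‖ = 1 := by
        have h2 : gC.eval 0 = ((g.eval 0 : ℤ) : ℂ) := by
          rw [hgC, eval_map, eval₂_at_zero, coeff_zero_eq_eval_zero]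
          rfl
        rw [h2]
        rcases Int.isUnit_iff.mp hu with h | h <;> simp [h]
      rw [← h1, hev0, norm_mul]
      congr 1
      rw [show ∀ s : Multiset ℂ, ‖s.prod‖ = (s.map (‖·‖)).prod from fun s => map_multiset_prod (normHom : ℂ →*₀ ℝ) s, Multiset.map_map]
      congr 1
      ext r
      simp
    have hlc : (1 : ℝ) ≤ ‖gC.leadingCoeff‖ := by
      have h2 : gC.leadingCoeff = ((g.leadingCoeff : ℤ) : ℂ) := by
        rw [hgC, leadingCoeff_map_of_leadingCoeff_ne_zero]
        · rfl
        · simpa using leadingCoeff_ne_zero.mpr hgne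
      rw [h2]
      have h3 := Int.one_le_abs (leadingCoeff_ne_zero.mpr hgne)
      calc (1:ℝ) ≤ |(g.leadingCoeff : ℝ)| := by exact_mod_cast h3
        _ = ‖((g.leadingCoeff : ℤ) : ℂ)‖ := by
            rw [show ((g.leadingCoeff : ℤ) : ℂ) = (((g.leadingCoeff : ℝ)) : ℂ) by push_cast; ring,
              Complex.norm_real, Real.norm_eq_abs]
    have hroots_gt : ∀ x ∈ gC.roots.map (fun r => ‖r‖), 1 < x := by
      intro x hx
      obtain ⟨r, hr, rfl⟩ := Multiset.mem_map.mp hx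
      apply hroot
      have hrg : gC.IsRoot r := isRoot_of_mem_roots hr
      have hdvd : gC ∣ f.map (Int.castRingHom ℂ) := Polynomial.map_dvd _ hg
      obtain ⟨q, hq⟩ := hdvd
      simp [hq, IsRoot, eval_mul, hrg.eq_zero]
    have hempty : gC.roots = 0 := by
      by_contra hne
      have h1 : 1 < (gC.roots.map (fun r => ‖r‖)).prod :=
        multiset_prod_gt_one (by simpa using hne) hroots_gt
      nlinarith [norm_nonneg gC.leadingCoeff]
    have hdeg : g.natDegree = 0 := by
      have h4 := hsplits.natDegree_eq_card_roots
      simp [hempty] at h4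
      rw [← natDegree_map_eq_of_injective hinj g]
      exact h4
    obtain ⟨c, hc⟩ := natDegree_eq_zero.mp hdeg
    rw [← hc, isUnit_C]
    have h5 : g.eval 0 = c := by rw [← hc]; simp
    rwa [h5] at hu
  -- the coefficient of degree m+1 is a (Fin.last m)
  have hcoeff : f.coeff (m + 1) = a (Fin.last m) := by
    rw [hf, coeff_add, coeff_C, if_neg (Nat.succ_ne_zero m), finset_sum_coeff]
    rw [Finset.sum_eq_single (Fin.last m)]
    · rw [coeff_C_mul, coeff_X_pow, if_pos (by simp [Fin.val_last]), mul_one, zero_add]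
    · intro i _ hi
      rw [coeff_C_mul, coeff_X_pow, if_neg, mul_zero]
      intro h
      exact hi (Fin.ext (by rw [Fin.val_last]; omega))
    · simp
  constructor
  · intro hu
    obtain ⟨r, hr, hrf⟩ := Polynomial.isUnit_iff.mp hu
    have h6 : f.coeff (m + 1) = 0 := by rw [← hrf, coeff_C]; simp
    rw [hcoeff] at h6
    exact hlead h6
  · intro g h hgh
    have hev : g.eval 0 * h.eval 0 = -(p : ℤ) := by
      rw [← eval_mul, ← hgh, hf0]
    have hprime : Prime (-(p : ℤ)) := (Nat.prime_iff_prime_int.mp hp).neg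
    rcases hprime.irreducible.isUnit_or_isUnit hev.symm with hu | hu
    · exact Or.inl (key g ⟨h, hgh⟩ hu)
    · exact Or.inr (key h ⟨g, by rw [hgh, mul_comm]⟩ hu)
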